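/- Let H and K be separable Hilbert spaces, let {pᵢ}ᵢ₌₁^∞ ⊆ H and {qⱼ}ⱼ₌₁^∞ ⊆ K be sequences of nonzero vectors. The doubly indexed family {pᵢ ⊗ qⱼ}ᵢ,ⱼ is a frame for the Hilbert space tensor product H ⊗ K if and only if {pᵢ} is a frame for H and {qⱼ} is a frame for K. -/

import Mathlib

open scoped RealInnerProductSpace ENNReal NNReal

/-- `IsHilbertTensorProduct tmul` says that the continuous bilinear map
`tmul : H →L K →L E` realizes `E` as the Hilbert space tensor product `H ⊗ K`:
`⟨p ⊗ q, p' ⊗ q'⟩ = ⟨p, p'⟩⟨q, q'⟩` and the elementary tensors span a dense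
subspace of `E`. -/
def IsHilbertTensorProduct {H K E : Type*}
    [NormedAddCommGroup H] [InnerProductSpace ℝ H]
    [NormedAddCommGroup K] [InnerProductSpace ℝ K]
    [NormedAddCommGroup E] [InnerProductSpace ℝ E]
    (tmul : H →L[ℝ] K →L[ℝ] E) : Prop :=
  (∀ (p p' : H) (q q' : K), ⟪tmul p q, tmul p' q'⟫ = ⟪p, p'⟫ * ⟪q, q'⟫) ∧
  Dense ((Submodule.span ℝ (Set.range fun z : H × K => tmul z.1 z.2) : Submodule ℝ E) : Set E)

/-- `IsFrameWith A B f`: the family `f` is a frame with frame bounds `A ≤ B`,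
i.e. `A‖x‖² ≤ Σᵢ |⟨x, fᵢ⟩|² ≤ B‖x‖²` for all `x`. -/
def IsFrameWith {ι X : Type*} [NormedAddCommGroup X] [InnerProductSpace ℝ X]
    (A B : ℝ) (f : ι → X) : Prop :=
  0 < A ∧ A ≤ B ∧
    ∀ x : X, A * ‖x‖ ^ 2 ≤ (∑' i : ι, ⟪x, f i⟫ ^ 2) ∧
      (∑' i : ι, ⟪x, f i⟫ ^ 2) ≤ B * ‖x‖ ^ 2

/-- for sequences of nonzero vectors, `{pᵢ ⊗ qⱼ}` is a frame for
`H ⊗ K` iff `{pᵢ}` is a frame for `H` and `{qⱼ}` is a frame for `K`. -/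
lemma IsFrameWith.summable_sq {ι X : Type*} [NormedAddCommGroup X] [InnerProductSpace ℝ X]
    {A B : ℝ} {f : ι → X} (h : IsFrameWith A B f) (x : X) :
    Summable fun i => ⟪x, f i⟫ ^ 2 := by
  by_cases hs : Summable fun i => ⟪x, f i⟫ ^ 2
  · exact hs
  · have h0 : (∑' i, ⟪x, f i⟫ ^ 2) = 0 := tsum_eq_zero_of_not_summable hs
    have hx := (h.2.2 x).1
    rw [h0] at hx
    have hn : ‖x‖ = 0 := by
      by_contra h'
      have hpos := mul_pos h.1 (pow_pos ((norm_nonneg x).lt_of_ne (Ne.symm h')) 2)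
      linarith
    have hx0 : x = 0 := norm_eq_zero.mp hn
    subst hx0
    simpa using summable_zero

lemma hilbert_parseval {ι X : Type*} [NormedAddCommGroup X] [InnerProductSpace ℝ X]
    [CompleteSpace X] (d : HilbertBasis ι ℝ X) (x : X) :
    HasSum (fun i => ⟪x, d i⟫ ^ 2) (‖x‖ ^ 2) := by
  have h := d.hasSum_inner_mul_inner x x
  rw [real_inner_self_eq_norm_sq] at h
  simpa only [real_inner_comm x, pow_two] using h

section fwd
variable {H K E : Type*}
    [NormedAddCommGroup H] [InnerProductSpace ℝ H] [CompleteSpace H]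
    [NormedAddCommGroup K] [InnerProductSpace ℝ K] [CompleteSpace K]
    [NormedAddCommGroup E] [InnerProductSpace ℝ E] [CompleteSpace E]
    (tmul : H →L[ℝ] K →L[ℝ] E) (htp : IsHilbertTensorProduct tmul)
    (p_ : ℕ → H) (q_ : ℕ → K)

lemma tensor_norm_sq (htp : IsHilbertTensorProduct tmul) (x : H) (y : K) : ‖tmul x y‖ ^ 2 = ‖x‖ ^ 2 * ‖y‖ ^ 2 := by
  rw [← real_inner_self_eq_norm_sq, htp.1, real_inner_self_eq_norm_sq,
    real_inner_self_eq_norm_sq]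

lemma fwd_dir (htp : IsHilbertTensorProduct tmul) {A B : ℝ}
    (hF : IsFrameWith A B (fun ij : ℕ × ℕ => tmul (p_ ij.1) (q_ ij.2)))
    (hp : ∀ i, p_ i ≠ 0) (hq : ∀ j, q_ j ≠ 0) :
    (∃ A B : ℝ, IsFrameWith A B p_) ∧ (∃ C D : ℝ, IsFrameWith C D q_) := by
  set a : H → ℕ → ℝ := fun x i => ⟪x, p_ i⟫ ^ 2 with ha
  set b : K → ℕ → ℝ := fun y j => ⟪y, q_ j⟫ ^ 2 with hb
  have hsum : ∀ (x : H) (y : K), Summable fun ij : ℕ × ℕ => a x ij.1 * b y ij.2 := by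
    intro x y
    have h := hF.summable_sq (tmul x y)
    simpa only [htp.1, mul_pow] using h
  -- positivity of diagonal terms
  have hb0 : 0 < b (q_ 0) 0 := by
    have h1 : (0:ℝ) < ⟪q_ 0, q_ 0⟫ := by
      rw [real_inner_self_eq_norm_sq]; exact pow_pos (norm_pos_iff.mpr (hq 0)) 2
    exact pow_pos h1 2
  have ha0 : 0 < a (p_ 0) 0 := by
    have h1 : (0:ℝ) < ⟪p_ 0, p_ 0⟫ := by
      rw [real_inner_self_eq_norm_sq]; exact pow_pos (norm_pos_iff.mpr (hp 0)) 2
    exact pow_pos h1 2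
  have hsa : ∀ x : H, Summable (a x) := by
    intro x
    have h1 : Summable fun i : ℕ => a x i * b (q_ 0) 0 :=
      (hsum x (q_ 0)).comp_injective (i := fun i : ℕ => ((i, 0) : ℕ × ℕ))
        (fun i j h => (Prod.ext_iff.1 h).1)
    have h2 := h1.mul_right (b (q_ 0) 0)⁻¹
    refine h2.congr fun i => ?_
    field_simp
  have hsb : ∀ y : K, Summable (b y) := by
    intro y
    have h1 : Summable fun j : ℕ => a (p_ 0) 0 * b y j :=
      (hsum (p_ 0) y).comp_injective (i := fun j : ℕ => ((0, j) : ℕ × ℕ))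
        (fun i j h => (Prod.ext_iff.1 h).2)
    have h2 := h1.mul_left (a (p_ 0) 0)⁻¹
    refine h2.congr fun j => ?_
    field_simp
  have hprod : ∀ (x : H) (y : K),
      (∑' ij : ℕ × ℕ, ⟪tmul x y, tmul (p_ ij.1) (q_ ij.2)⟫ ^ 2)
        = (∑' i, a x i) * (∑' j, b y j) := by
    intro x y
    rw [Summable.tsum_mul_tsum (hsa x) (hsb y) (hsum x y)]
    congr 1
    funext ij
    rw [htp.1, mul_pow]
  set Q0 : ℝ := ∑' j, b (q_ 0) j with hQ0def
  have hQ0 : 0 < Q0 := lt_of_lt_of_le hb0 (Summable.le_tsum (hsb (q_ 0)) 0 fun j _ => sq_nonneg _)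
  set P0 : ℝ := ∑' i, a (p_ 0) i with hP0def
  have hP0 : 0 < P0 := lt_of_lt_of_le ha0 (Summable.le_tsum (hsa (p_ 0)) 0 fun i _ => sq_nonneg _)
  have hnq : (0:ℝ) < ‖q_ 0‖ ^ 2 := pow_pos (norm_pos_iff.mpr (hq 0)) 2
  have hnp : (0:ℝ) < ‖p_ 0‖ ^ 2 := pow_pos (norm_pos_iff.mpr (hp 0)) 2
  have hAB := hF.2.1
  constructor
  · refine ⟨A * ‖q_ 0‖ ^ 2 / Q0, B * ‖q_ 0‖ ^ 2 / Q0,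
      div_pos (mul_pos hF.1 hnq) hQ0, by gcongr ?_ / Q0; nlinarith, fun x => ?_⟩
    have hfr := hF.2.2 (tmul x (q_ 0))
    rw [show (fun ij : ℕ × ℕ => ⟪tmul x (q_ 0), tmul (p_ ij.1) (q_ ij.2)⟫ ^ 2)
        = fun ij : ℕ × ℕ => ⟪tmul x (q_ 0), tmul (p_ ij.1) (q_ ij.2)⟫ ^ 2 from rfl,
      hprod x (q_ 0), tensor_norm_sq tmul htp] at hfr
    constructor
    · rw [div_mul_eq_mul_div, div_le_iff₀ hQ0]
      calc A * ‖q_ 0‖ ^ 2 * ‖x‖ ^ 2 = A * (‖x‖ ^ 2 * ‖q_ 0‖ ^ 2) := by ring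
        _ ≤ (∑' i, a x i) * Q0 := hfr.1
    · rw [div_mul_eq_mul_div, le_div_iff₀ hQ0]
      calc (∑' i, a x i) * Q0 ≤ B * (‖x‖ ^ 2 * ‖q_ 0‖ ^ 2) := hfr.2
        _ = B * ‖q_ 0‖ ^ 2 * ‖x‖ ^ 2 := by ring
  · refine ⟨A * ‖p_ 0‖ ^ 2 / P0, B * ‖p_ 0‖ ^ 2 / P0,
      div_pos (mul_pos hF.1 hnp) hP0, by gcongr ?_ / P0; nlinarith, fun y => ?_⟩
    have hfr := hF.2.2 (tmul (p_ 0) y)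
    rw [hprod (p_ 0) y, tensor_norm_sq tmul htp] at hfr
    constructor
    · rw [div_mul_eq_mul_div, div_le_iff₀ hP0]
      calc A * ‖p_ 0‖ ^ 2 * ‖y‖ ^ 2 = A * (‖p_ 0‖ ^ 2 * ‖y‖ ^ 2) := by ring
        _ ≤ P0 * (∑' j, b y j) := hfr.1
        _ = (∑' j, b y j) * P0 := by ring
    · rw [div_mul_eq_mul_div, le_div_iff₀ hP0]
      calc (∑' j, b y j) * P0 = P0 * (∑' j, b y j) := by ring
        _ ≤ B * (‖p_ 0‖ ^ 2 * ‖y‖ ^ 2) := hfr.2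
        _ = B * ‖p_ 0‖ ^ 2 * ‖y‖ ^ 2 := by ring

open InnerProductSpace in
lemma rev_dir (htp : IsHilbertTensorProduct tmul) {A B C D : ℝ}
    (hP : IsFrameWith A B p_) (hQ : IsFrameWith C D q_) :
    IsFrameWith (A * C) (B * D) (fun ij : ℕ × ℕ => tmul (p_ ij.1) (q_ ij.2)) := by
  classical
  obtain ⟨wH, b, hbcoe⟩ := exists_hilbertBasis ℝ H
  obtain ⟨wK, c, hccoe⟩ := exists_hilbertBasis ℝ K
  -- the induced orthonormal family on E
  set v : wH × wK → E := fun z => tmul (b z.1) (c z.2) with hv_def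
  have hv_on : Orthonormal ℝ v := by
    rw [orthonormal_iff_ite]
    intro z z'
    have h1 := orthonormal_iff_ite.mp b.orthonormal z.1 z'.1
    have h2 := orthonormal_iff_ite.mp c.orthonormal z.2 z'.2
    rw [hv_def]
    simp only [htp.1, h1, h2]
    by_cases h : z = z'
    · simp [h]
    · rcases (not_and_or.mp (fun hh => h (Prod.ext hh.1 hh.2))) with h' | h'
      · simp [if_neg h', h]
      · simp [if_neg h', h]
  -- density of the span of v
  have hv_sp : ⊤ ≤ (Submodule.span ℝ (Set.range v)).topologicalClosure := by
    set M := (Submodule.span ℝ (Set.range v)).topologicalClosure with hM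
    have hMclosed : IsClosed (M : Set E) := Submodule.isClosed_topologicalClosure _
    have step1 : ∀ (e : wK) (x : H), tmul x (c e) ∈ M := by
      intro e
      have hsub : Submodule.span ℝ (Set.range (⇑b)) ≤
          M.comap ((tmul.flip (c e)) : H →ₗ[ℝ] E) := by
        rw [Submodule.span_le]
        rintro - ⟨f, rfl⟩
        have : tmul (b f) (c e) ∈ M :=
          Submodule.le_topologicalClosure _ (Submodule.subset_span ⟨(f, e), rfl⟩)
        simpa using this
      have hclosed : IsClosed ((M.comap ((tmul.flip (c e)) : H →ₗ[ℝ] E) : Submodule ℝ H) : Set H) :=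
        hMclosed.preimage (tmul.flip (c e)).continuous
      have htop : (⊤ : Submodule ℝ H) ≤ M.comap ((tmul.flip (c e)) : H →ₗ[ℝ] E) := by
        have h := Submodule.topologicalClosure_minimal _ hsub hclosed
        rwa [b.dense_span] at h
      intro x
      simpa using htop (Submodule.mem_top (x := x))
    have step2 : ∀ (x : H) (y : K), tmul x y ∈ M := by
      intro x
      have hsub : Submodule.span ℝ (Set.range (⇑c)) ≤ M.comap ((tmul x) : K →ₗ[ℝ] E) := by
        rw [Submodule.span_le]
        rintro - ⟨e, rfl⟩
        simpa using step1 e x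
      have hclosed : IsClosed ((M.comap ((tmul x) : K →ₗ[ℝ] E) : Submodule ℝ K) : Set K) :=
        hMclosed.preimage (tmul x).continuous
      have htop : (⊤ : Submodule ℝ K) ≤ M.comap ((tmul x) : K →ₗ[ℝ] E) := by
        have h := Submodule.topologicalClosure_minimal _ hsub hclosed
        rwa [c.dense_span] at h
      intro y
      simpa using htop (Submodule.mem_top (x := y))
    have hle : Submodule.span ℝ (Set.range fun z : H × K => tmul z.1 z.2) ≤ M := by
      rw [Submodule.span_le]
      rintro - ⟨z, rfl⟩
      exact step2 z.1 z.2
    intro u _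
    have h1 : u ∈ closure
        ((Submodule.span ℝ (Set.range fun z : H × K => tmul z.1 z.2) : Submodule ℝ E) : Set E) := by
      rw [htp.2.closure_eq]; trivial
    have h2 : closure
        ((Submodule.span ℝ (Set.range fun z : H × K => tmul z.1 z.2) : Submodule ℝ E) : Set E)
        ⊆ (M : Set E) := by
      rw [← hMclosed.closure_eq]
      exact closure_mono hle
    exact h2 h1
  -- the Hilbert basis of E
  set be : HilbertBasis (wH × wK) ℝ E := HilbertBasis.mk hv_on hv_sp with hbe
  have hbe_coe : ∀ z : wH × wK, be z = tmul (b z.1) (c z.2) := by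
    intro z
    rw [hbe]
    rw [show ((HilbertBasis.mk hv_on hv_sp) z) = v z from congrFun (HilbertBasis.coe_mk hv_on hv_sp) z]
  -- Riesz representatives
  set vv : E → ℕ → K := fun u i => (toDual ℝ K).symm ((innerSL ℝ u).comp (tmul (p_ i))) with hvv
  have hvv_inner : ∀ (u : E) (i : ℕ) (y : K), ⟪vv u i, y⟫ = ⟪u, tmul (p_ i) y⟫ := by
    intro u i y
    rw [hvv]
    simp [toDual_symm_apply]
  set ww : E → wK → H := fun u e => (toDual ℝ H).symm ((innerSL ℝ u).comp (tmul.flip (c e)))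
    with hww
  have hww_inner : ∀ (u : E) (e : wK) (x : H), ⟪ww u e, x⟫ = ⟪u, tmul x (c e)⟫ := by
    intro u e x
    rw [hww]
    simp [toDual_symm_apply]
  have hApos := hP.1
  have hBpos : (0:ℝ) < B := lt_of_lt_of_le hP.1 hP.2.1
  have hCpos := hQ.1
  have hDpos : (0:ℝ) < D := lt_of_lt_of_le hQ.1 hQ.2.1
  refine ⟨mul_pos hApos hCpos,
    mul_le_mul hP.2.1 hQ.2.1 hCpos.le hBpos.le, fun u => ?_⟩
  set F : ℕ × ℕ → ℝ := fun ij => ⟪u, tmul (p_ ij.1) (q_ ij.2)⟫ ^ 2 with hF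
  set g : ℝ≥0∞ := ∑' ij : ℕ × ℕ, ENNReal.ofReal (F ij) with hg
  set W : ℝ≥0∞ := ∑' i : ℕ, ENNReal.ofReal (‖vv u i‖ ^ 2) with hW
  set U : ℝ≥0∞ := ∑' e : wK, ENNReal.ofReal (‖ww u e‖ ^ 2) with hU
  -- step 1 : g as iterated sum over the Riesz vectors vv
  have hg1 : g = ∑' i : ℕ, ENNReal.ofReal (∑' j : ℕ, ⟪vv u i, q_ j⟫ ^ 2) := by
    rw [hg, ENNReal.tsum_prod']
    congr 1
    funext i
    rw [ENNReal.ofReal_tsum_of_nonneg (fun j => sq_nonneg _) (hQ.summable_sq (vv u i))]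
    congr 1
    funext j
    simp only [hF]
    rw [hvv_inner]
  -- step 2 : frame bounds for q_ applied to each vv u i
  have hg_low : ENNReal.ofReal C * W ≤ g := by
    rw [hg1, hW, ← ENNReal.tsum_mul_left]
    refine ENNReal.tsum_le_tsum fun i => ?_
    rw [← ENNReal.ofReal_mul hCpos.le]
    exact ENNReal.ofReal_le_ofReal (hQ.2.2 (vv u i)).1
  have hg_up : g ≤ ENNReal.ofReal D * W := by
    rw [hg1, hW, ← ENNReal.tsum_mul_left]
    refine ENNReal.tsum_le_tsum fun i => ?_
    rw [← ENNReal.ofReal_mul hDpos.le]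
    exact ENNReal.ofReal_le_ofReal (hQ.2.2 (vv u i)).2
  -- step 3 : W as iterated sum over the Riesz vectors ww
  have hvw : ∀ (i : ℕ) (e : wK), ⟪vv u i, c e⟫ = ⟪ww u e, p_ i⟫ := by
    intro i e
    rw [hvv_inner, hww_inner]
  have hW1 : W = ∑' e : wK, ENNReal.ofReal (∑' i : ℕ, ⟪ww u e, p_ i⟫ ^ 2) := by
    have h1 : ∀ i : ℕ, ENNReal.ofReal (‖vv u i‖ ^ 2)
        = ∑' e : wK, ENNReal.ofReal (⟪ww u e, p_ i⟫ ^ 2) := by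
      intro i
      rw [← (hilbert_parseval c (vv u i)).tsum_eq,
        ENNReal.ofReal_tsum_of_nonneg (fun e => sq_nonneg _) (hilbert_parseval c (vv u i)).summable]
      congr 1
      funext e
      rw [hvw]
    rw [hW]
    simp_rw [h1]
    rw [ENNReal.tsum_comm]
    congr 1
    funext e
    rw [← ENNReal.ofReal_tsum_of_nonneg (fun i => sq_nonneg _) (hP.summable_sq (ww u e))]
  -- step 4 : frame bounds for p_ applied to each ww u e
  have hW_low : ENNReal.ofReal A * U ≤ W := by
    rw [hW1, hU, ← ENNReal.tsum_mul_left]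
    refine ENNReal.tsum_le_tsum fun e => ?_
    rw [← ENNReal.ofReal_mul hApos.le]
    exact ENNReal.ofReal_le_ofReal (hP.2.2 (ww u e)).1
  have hW_up : W ≤ ENNReal.ofReal B * U := by
    rw [hW1, hU, ← ENNReal.tsum_mul_left]
    refine ENNReal.tsum_le_tsum fun e => ?_
    rw [← ENNReal.ofReal_mul hBpos.le]
    exact ENNReal.ofReal_le_ofReal (hP.2.2 (ww u e)).2
  -- step 5 : U = ‖u‖²  (Parseval in E)
  have hU1 : U = ENNReal.ofReal (‖u‖ ^ 2) := by
    have h1 : ∀ e : wK, ENNReal.ofReal (‖ww u e‖ ^ 2)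
        = ∑' f : wH, ENNReal.ofReal (⟪u, be (f, e)⟫ ^ 2) := by
      intro e
      rw [← (hilbert_parseval b (ww u e)).tsum_eq,
        ENNReal.ofReal_tsum_of_nonneg (fun f => sq_nonneg _) (hilbert_parseval b (ww u e)).summable]
      congr 1
      funext f
      rw [hww_inner, hbe_coe]
    have hparse : ENNReal.ofReal (‖u‖ ^ 2) = ∑' z : wH × wK, ENNReal.ofReal (⟪u, be z⟫ ^ 2) := by
      rw [← (hilbert_parseval be u).tsum_eq,
        ENNReal.ofReal_tsum_of_nonneg (fun z => sq_nonneg _) (hilbert_parseval be u).summable]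
    rw [hU]
    simp_rw [h1]
    rw [ENNReal.tsum_comm, ← ENNReal.tsum_prod' (f := fun z : wH × wK => ENNReal.ofReal (⟪u, be z⟫ ^ 2))]
    exact hparse.symm
  -- assemble the two ENNReal bounds
  have hlow : ENNReal.ofReal (A * C * ‖u‖ ^ 2) ≤ g := by
    calc ENNReal.ofReal (A * C * ‖u‖ ^ 2)
        = ENNReal.ofReal C * (ENNReal.ofReal A * ENNReal.ofReal (‖u‖ ^ 2)) := by
          rw [← ENNReal.ofReal_mul hApos.le, ← ENNReal.ofReal_mul hCpos.le]
          ring_nf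
      _ ≤ ENNReal.ofReal C * W := by
          refine mul_le_mul_right ?_ _
          rw [← hU1]
          exact hW_low
      _ ≤ g := hg_low
  have hup : g ≤ ENNReal.ofReal (B * D * ‖u‖ ^ 2) := by
    calc g ≤ ENNReal.ofReal D * W := hg_up
      _ ≤ ENNReal.ofReal D * (ENNReal.ofReal B * ENNReal.ofReal (‖u‖ ^ 2)) := by
          refine mul_le_mul_right ?_ _
          rw [← hU1]
          exact hW_up
      _ = ENNReal.ofReal (B * D * ‖u‖ ^ 2) := by
          rw [← ENNReal.ofReal_mul hBpos.le, ← ENNReal.ofReal_mul hDpos.le]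
          ring_nf
  -- summability of F
  have hg_ne_top : g ≠ ⊤ := ne_top_of_le_ne_top ENNReal.ofReal_ne_top hup
  have hsumF : Summable F := by
    have h1 : Summable fun ij : ℕ × ℕ => (F ij).toNNReal := by
      rw [← ENNReal.tsum_coe_ne_top_iff_summable]
      exact hg_ne_top
    have h2 := NNReal.summable_coe.mpr h1
    refine h2.congr fun ij => ?_
    exact Real.coe_toNNReal _ (sq_nonneg _)
  have hg_eq : ENNReal.ofReal (∑' ij : ℕ × ℕ, F ij) = g :=
    ENNReal.ofReal_tsum_of_nonneg (fun ij => sq_nonneg _) hsumF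
  have hS_nonneg : 0 ≤ ∑' ij : ℕ × ℕ, F ij := tsum_nonneg fun ij => sq_nonneg _
  constructor
  · rw [← hg_eq] at hlow
    exact (ENNReal.ofReal_le_ofReal_iff hS_nonneg).mp hlow
  · rw [← hg_eq] at hup
    have hBD : (0:ℝ) ≤ B * D * ‖u‖ ^ 2 := by positivity
    exact (ENNReal.ofReal_le_ofReal_iff hBD).mp hup

end fwd

theorem tensor_frame_iff {H K E : Type*}
    [NormedAddCommGroup H] [InnerProductSpace ℝ H] [CompleteSpace H]
    [NormedAddCommGroup K] [InnerProductSpace ℝ K] [CompleteSpace K]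
    [NormedAddCommGroup E] [InnerProductSpace ℝ E] [CompleteSpace E]
    (tmul : H →L[ℝ] K →L[ℝ] E) (htp : IsHilbertTensorProduct tmul)
    (p_ : ℕ → H) (q_ : ℕ → K) (hp : ∀ i, p_ i ≠ 0) (hq : ∀ j, q_ j ≠ 0) :
    (∃ A B : ℝ, IsFrameWith A B (fun ij : ℕ × ℕ => tmul (p_ ij.1) (q_ ij.2))) ↔
      (∃ A B : ℝ, IsFrameWith A B p_) ∧ (∃ C D : ℝ, IsFrameWith C D q_) := by
  constructor
  · rintro ⟨A, B, hF⟩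
    exact fwd_dir tmul p_ q_ htp hF hp hq
  · rintro ⟨⟨A, B, hPf⟩, ⟨C, D, hQf⟩⟩
    exact ⟨A * C, B * D, rev_dir tmul p_ q_ htp hPf hQf⟩
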